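/- Let N ≥ 2 be an integer, let φ̂ be the Meyer Fourier transform (φ̂(ω) = 1 for |ω| ≤ 2π/3, cos((π/2)·ν(3|ω|/(2π) − 1)) for 2π/3 ≤ |ω| ≤ 4π/3, 0 otherwise), and let H⁰ : ℝ → ℝ be the 2π-periodic function equal on [−π, π] to: 1 for |ω| ≤ 2π/(3N), cos((π/2)·ν(3N|ω|/(2π) − 1)) for 2π/(3N) ≤ |ω| ≤ 4π/(3N), and 0 otherwise. Then for all ω ∈ ℝ, φ̂(ω) = H⁰(ω/N) · φ̂(ω/N). -/
import Mathlib


open Real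

set_option maxHeartbeats 1600000 in
theorem meyer_is_N_scaling
    (N : ℕ) (hN : 2 ≤ N)
    (ν φhat H0 : ℝ → ℝ)
    (hν0 : ∀ x ≤ (0:ℝ), ν x = 0) (hν1 : ∀ x ≥ (1:ℝ), ν x = 1)
    (hνs : ∀ x, ν x + ν (1 - x) = 1)
    (hφ : ∀ ω, φhat ω =
      if |ω| ≤ 2*π/3 then 1
      else if |ω| ≤ 4*π/3 then Real.cos (π/2 * ν (3*|ω|/(2*π) - 1))
      else 0)
    (hH0per : ∀ ω, H0 (ω + 2*π) = H0 ω)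
    (hH0 : ∀ ω ∈ Set.Icc (-π) π, H0 ω =
      if |ω| ≤ 2*π/(3*N) then 1
      else if |ω| ≤ 4*π/(3*N) then Real.cos (π/2 * ν (3*N*|ω|/(2*π) - 1))
      else 0) :
    ∀ ω : ℝ, φhat ω = H0 (ω / N) * φhat (ω / N) := by
  intro ω
  have hπ := Real.pi_pos
  have hN2 : (2:ℝ) ≤ (N:ℝ) := by exact_mod_cast hN
  have hNpos : (0:ℝ) < N := by linarith
  have habs : |ω / N| = |ω| / N := by
    rw [abs_div, abs_of_pos hNpos]
  have hmul : (N:ℝ) * (ω / N) = ω := by field_simp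
  have hmulabs : (N:ℝ) * |ω / N| = |ω| := by
    rw [habs]; field_simp
  have hao := abs_nonneg ω
  by_cases h1 : |ω| ≤ 2*π/3
  · -- |ω| ≤ 2π/3 : everything is 1
    have hx1 : |ω/N| ≤ 2*π/(3*N) := by
      rw [habs, div_le_div_iff₀ hNpos (by positivity)]
      nlinarith
    have hx2 : |ω/N| ≤ 2*π/3 := by
      rw [habs]
      calc |ω|/N ≤ |ω|/2 := by
            apply div_le_div_of_nonneg_left hao (by norm_num) hN2
        _ ≤ 2*π/3 := by nlinarith
    have hmem : ω/N ∈ Set.Icc (-π) π := by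
      constructor <;> [nlinarith [abs_le.mp hx2]; nlinarith [abs_le.mp hx2]]
    rw [hφ ω, if_pos h1, hφ (ω/N), if_pos hx2, hH0 _ hmem, if_pos hx1]
    ring
  · push_neg at h1
    by_cases h2 : |ω| ≤ 4*π/3
    · -- middle band
      have hx1 : ¬ |ω/N| ≤ 2*π/(3*N) := by
        rw [habs, not_le, div_lt_div_iff₀ (by positivity) hNpos]
        nlinarith
      have hx2 : |ω/N| ≤ 4*π/(3*N) := by
        rw [habs, div_le_div_iff₀ hNpos (by positivity)]
        nlinarith
      have hx3 : |ω/N| ≤ 2*π/3 := by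
        rw [habs]
        calc |ω|/N ≤ |ω|/2 := by
              apply div_le_div_of_nonneg_left hao (by norm_num) hN2
          _ ≤ 2*π/3 := by nlinarith
      have hmem : ω/N ∈ Set.Icc (-π) π := by
        constructor <;> [nlinarith [abs_le.mp hx3]; nlinarith [abs_le.mp hx3]]
      have harg : 3*(N:ℝ)*|ω/N|/(2*π) - 1 = 3*|ω|/(2*π) - 1 := by
        rw [show 3*(N:ℝ)*|ω/N| = 3*((N:ℝ)*|ω/N|) by ring, hmulabs]
      rw [hφ ω, if_neg (not_le.mpr h1), if_pos h2, hφ (ω/N), if_pos hx3,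
        hH0 _ hmem, if_neg hx1, if_pos hx2, harg]
      ring
    · -- |ω| > 4π/3 : φhat ω = 0, show RHS = 0
      push_neg at h2
      rw [hφ ω, if_neg (not_le.mpr h1), if_neg (not_le.mpr h2)]
      have hx4 : 4*π/(3*N) < |ω/N| := by
        rw [habs, div_lt_div_iff₀ (by positivity) hNpos]
        nlinarith
      have hx2' : 2*π/(3*N) < |ω/N| := by
        have : 2*π/(3*N) ≤ 4*π/(3*N) := by
          apply div_le_div_of_nonneg_right (by nlinarith) (by positivity)
        linarith
      by_cases hp : |ω/N| ≤ π
      · -- directly in [-π, π], third branch gives 0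
        have hmem : ω/N ∈ Set.Icc (-π) π := by
          constructor <;> [nlinarith [abs_le.mp hp]; nlinarith [abs_le.mp hp]]
        rw [hH0 _ hmem, if_neg (not_le.mpr hx2'), if_neg (not_le.mpr hx4)]
        ring
      · push_neg at hp
        by_cases hq : |ω/N| ≤ 4*π/3
        · -- π < |ω/N| ≤ 4π/3 : reduce by periodicity
          -- let y be the reduction of ω/N into [-π, π]
          have key : ∀ y ∈ Set.Icc (-π) π, 2*π/3 ≤ |y| → H0 y = 0 := by
            intro y hy hy23
            rw [hH0 y hy]
            have hyn : ¬ |y| ≤ 2*π/(3*N) := by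
              push_neg
              calc 2*π/(3*(N:ℝ)) ≤ 2*π/(3*2) := by
                    apply div_le_div_of_nonneg_left (by positivity) (by norm_num)
                    nlinarith
                _ < 2*π/3 := by
                    apply div_lt_div_of_pos_left (by positivity) (by norm_num) (by norm_num)
                _ ≤ |y| := hy23
            rw [if_neg hyn]
            by_cases hy2 : |y| ≤ 4*π/(3*N)
            · rw [if_pos hy2]
              have harg1 : (1:ℝ) ≤ 3*(N:ℝ)*|y|/(2*π) - 1 := by
                rw [le_sub_iff_add_le, le_div_iff₀ (by positivity)]
                nlinarith
              rw [hν1 _ harg1]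
              simp [Real.cos_pi_div_two]
            · rw [if_neg hy2]
          rcases le_or_gt 0 (ω/N) with hsgn | hsgn
          · have hxval : |ω/N| = ω/N := abs_of_nonneg hsgn
            have hpl : π < ω/N := hxval ▸ hp
            have hql : ω/N ≤ 4*π/3 := hxval ▸ hq
            have hper := hH0per (ω/N - 2*π)
            rw [show ω/N - 2*π + 2*π = ω/N by ring] at hper
            have hymem : ω/N - 2*π ∈ Set.Icc (-π) π := by
              constructor <;> linarith
            have hy23 : 2*π/3 ≤ |ω/N - 2*π| := by
              rw [abs_of_nonpos (by linarith)]
              linarith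
            rw [hper, key _ hymem hy23]
            ring
          · have hxval : |ω/N| = -(ω/N) := abs_of_neg hsgn
            have hpl : π < -(ω/N) := hxval ▸ hp
            have hql : -(ω/N) ≤ 4*π/3 := hxval ▸ hq
            have hper := hH0per (ω/N)
            have hymem : ω/N + 2*π ∈ Set.Icc (-π) π := by
              constructor <;> linarith
            have hy23 : 2*π/3 ≤ |ω/N + 2*π| := by
              rw [abs_of_nonneg (by linarith)]
              linarith
            rw [← hper, key _ hymem hy23]
            ring
        · -- |ω/N| > 4π/3 : φhat (ω/N) = 0
          push_neg at hq
          rw [hφ (ω/N), if_neg (not_le.mpr (by linarith : 2*π/3 < |ω/N|)),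
            if_neg (not_le.mpr hq)]
          ring
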